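/- In the Gelfand triple setting with chain of spaces H_{k}, the following adjointness identity holds for every integer k: (A_{k+1}u, v)_{k-1} = (u, v)_k for all u ∈ H_{k+1} and v ∈ H_k. -/

import Mathlib

/-- In the Gelfand triple setting with the chain of embedded Hilbert
spaces `H_k` (k ∈ ℤ), built from the pivot `H₀` with the operators
`A_k : H_k → H_{k-2}` (each `A_{k+2}` the restriction of `A_{k+1}`, with
`(u,v)_{k} = (A_k u, A_k v)_{k-2}` and the base defining property
`(A₂u, v)₀ = (u,v)₁`), the adjointness identity
`(A_{k+1}u, v)_{k-1} = (u, v)_k` holds for every integer `k`, all `u ∈ H_{k+1}` and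
all `v ∈ H_k`.  The chain is modelled as an increasing family of submodules of an
ambient vector space `E` (the union of the chain), with inner products `ip k`. -/
theorem statement_3
    {E : Type*} [AddCommGroup E] [Module ℝ E]
    (H : ℤ → Submodule ℝ E) (ip : ℤ → E → E → ℝ) (A : ℤ → E →ₗ[ℝ] E)
    (mono : ∀ k : ℤ, H (k + 1) ≤ H k)
    (maps : ∀ k : ℤ, ∀ u ∈ H k, A k u ∈ H (k - 2))
    (restrict : ∀ k : ℤ, ∀ u ∈ H (k + 1), A (k + 1) u = A k u)
    (surj : ∀ k : ℤ, ∀ w ∈ H (k - 2), ∃ u ∈ H k, A k u = w)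
    (symm : ∀ k : ℤ, ∀ u ∈ H k, ∀ v ∈ H k, ip k u v = ip k v u)
    (ip_rec : ∀ k : ℤ, ∀ u ∈ H k, ∀ v ∈ H k, ip k u v = ip (k - 2) (A k u) (A k v))
    (base : ∀ u ∈ H 2, ∀ v ∈ H 1, ip 0 (A 2 u) v = ip 1 u v) :
    ∀ k : ℤ, ∀ u ∈ H (k + 1), ∀ v ∈ H k, ip (k - 1) (A (k + 1) u) v = ip k u v := by
  set P : ℤ → Prop := fun n => ∀ u ∈ H (n + 1), ∀ v ∈ H n, ip (n - 1) (A (n + 1) u) v = ip n u v with hP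
  have up : ∀ n : ℤ, P n → P (n + 1) := by
    intro n hn
    simp only [hP]
    have e1 : (n : ℤ) + 1 + 1 = n + 2 := by ring
    have e2 : (n : ℤ) + 1 - 1 = n := by ring
    have e3 : (n : ℤ) + 2 - 2 = n := by ring
    have e4 : (n : ℤ) + 1 - 2 = n - 1 := by ring
    rw [e1, e2]
    intro u hu v hv
    have hu' : u ∈ H (n + 1) := by have := mono (n + 1); rw [e1] at this; exact this hu
    have hAu : A (n + 2) u ∈ H n := by have := maps (n + 2) u hu; rwa [e3] at this
    have hrw : A (n + 2) u = A (n + 1) u := by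
      have := restrict (n + 1) u; rw [e1] at this; exact this hu
    have hAu' : A (n + 1) u ∈ H n := hrw ▸ hAu
    calc ip n (A (n + 2) u) v = ip n v (A (n + 2) u) := symm n _ hAu v (mono n hv)
      _ = ip n v (A (n + 1) u) := by rw [hrw]
      _ = ip (n - 1) (A (n + 1) v) (A (n + 1) u) := (hn v hv _ hAu').symm
      _ = ip (n - 1) (A (n + 1) u) (A (n + 1) v) := by
          have h1 := maps (n + 1) v hv
          have h2 := maps (n + 1) u hu'
          rw [e4] at h1 h2
          exact symm (n - 1) _ h1 _ h2
      _ = ip (n + 1) u v := by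
          have := ip_rec (n + 1) u hu' v hv
          rw [e4] at this
          exact this.symm
  have down : ∀ n : ℤ, P (n + 1) → P n := by
    intro n hn
    simp only [hP] at hn ⊢
    have e1 : (n : ℤ) + 1 + 1 = n + 2 := by ring
    have e2 : (n : ℤ) + 1 - 1 = n := by ring
    have e3 : (n : ℤ) + 2 - 2 = n := by ring
    have e4 : (n : ℤ) + 1 - 2 = n - 1 := by ring
    rw [e1, e2] at hn
    intro u hu v hv
    obtain ⟨w, hw, hAw⟩ := surj (n + 2) v (by rwa [e3])
    have hw' : w ∈ H (n + 1) := by have := mono (n + 1); rw [e1] at this; exact this hw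
    have hAwm : A (n + 2) w ∈ H n := by have := maps (n + 2) w hw; rwa [e3] at this
    have hrw : A (n + 2) w = A (n + 1) w := by
      have := restrict (n + 1) w; rw [e1] at this; exact this hw
    have hun : u ∈ H n := mono n hu
    calc ip (n - 1) (A (n + 1) u) v = ip (n - 1) (A (n + 1) u) (A (n + 1) w) := by
          rw [← hAw, hrw]
      _ = ip (n + 1) u w := by
          have := ip_rec (n + 1) u hu w hw'
          rw [e4] at this
          exact this.symm
      _ = ip (n + 1) w u := symm (n + 1) u hu w hw'
      _ = ip n (A (n + 2) w) u := (hn w hw u hu).symm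
      _ = ip n u (A (n + 2) w) := symm n _ hAwm u hun
      _ = ip n u v := by rw [hAw]
  have base1 : P 1 := by
    simp only [hP]
    norm_num
    intro u hu v hv
    exact base u hu v hv
  have base0 : P 0 := down 0 (by norm_num; exact base1)
  intro k
  induction k using Int.induction_on with
  | zero => exact base0
  | succ i ih => exact up i ih
  | pred i ih =>
      have := down (-(i : ℤ) - 1)
      rw [show (-(i:ℤ) - 1 + 1) = -(i:ℤ) by ring] at this
      exact this ih
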